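/- For every integer p ≥ 1, every R > 0 and every L > 0, ∫₀^R (r − R)^{p−1} · I₀(L√(2r)) dr = −(p−1)! · (−√(2R)/L)^p · I_p(L√(2R)). -/

import Mathlib

open Real MeasureTheory

/-- Modified Bessel function of the first kind of nonnegative integer order `ν`. -/
noncomputable def besselI (ν : ℕ) (x : ℝ) : ℝ :=
  ∑' k : ℕ, (x / 2) ^ (2 * k + ν) / ((Nat.factorial k : ℝ) * (Nat.factorial (k + ν) : ℝ))

open intervalIntegral in
lemma beta_nat (n : ℕ) : ∀ (m : ℕ) (R : ℝ),
    ∫ r in (0:ℝ)..R, r ^ m * (R - r) ^ n =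
      (Nat.factorial m * Nat.factorial n / Nat.factorial (m + n + 1)) * R ^ (m + n + 1) := by
  induction n with
  | zero =>
    intro m R
    simp only [pow_zero, mul_one, integral_pow, Nat.factorial_zero, Nat.cast_one,
      Nat.add_zero, Nat.mul_one]
    rw [Nat.factorial_succ]
    push_cast
    rw [zero_pow (by omega)]
    field_simp
    ring
  | succ n ih =>
    intro m R
    have hm : ((m:ℝ)+1) ≠ 0 := by positivity
    have hu : ∀ x ∈ Set.uIcc (0:ℝ) R,
        HasDerivAt (fun r : ℝ => r ^ (m+1) / (m+1)) (x ^ m) x := by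
      intro x _
      have h := (hasDerivAt_pow (m+1) x).div_const ((m:ℝ)+1)
      refine h.congr_deriv ?_
      push_cast
      field_simp
    have hv : ∀ x ∈ Set.uIcc (0:ℝ) R,
        HasDerivAt (fun r : ℝ => (R - r) ^ (n+1)) (((n:ℝ)+1) * (R - x) ^ n * (-1)) x := by
      intro x _
      have h1 : HasDerivAt (fun r : ℝ => R - r) (-1) x := (hasDerivAt_id x).const_sub R
      have := h1.pow (n+1)
      refine this.congr_deriv ?_
      push_cast
      ring
    have hu' : IntervalIntegrable (fun x : ℝ => x ^ m) volume 0 R :=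
      (continuous_pow m).intervalIntegrable _ _
    have hv' : IntervalIntegrable (fun x : ℝ => ((n:ℝ)+1) * (R - x) ^ n * (-1)) volume 0 R := by
      apply Continuous.intervalIntegrable
      continuity
    have key := integral_mul_deriv_eq_deriv_mul hu hv hu' hv'
    have h2 : (∫ x in (0:ℝ)..R, x ^ (m+1) / (m+1) * (((n:ℝ)+1) * (R - x) ^ n * (-1)))
        = (-((n:ℝ)+1)/((m:ℝ)+1)) * ∫ x in (0:ℝ)..R, x ^ (m+1) * (R - x) ^ n := by
      rw [← intervalIntegral.integral_const_mul]
      congr 1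
      ext x
      field_simp
    rw [h2, ih (m+1) R] at key
    simp only [sub_self, zero_pow (Nat.succ_ne_zero m), zero_pow (Nat.succ_ne_zero n),
      zero_div, zero_mul, mul_zero, zero_sub, sub_zero] at key
    have h3 : (∫ x in (0:ℝ)..R, x ^ m * (R - x) ^ (n+1)) =
        -((-((n:ℝ)+1)/((m:ℝ)+1)) * ((Nat.factorial (m+1) * Nat.factorial n /
          Nat.factorial (m + 1 + n + 1)) * R ^ (m + 1 + n + 1))) := by
      linarith [key]
    rw [h3]
    have hfac : (Nat.factorial (m + (n+1) + 1) : ℝ) ≠ 0 := by positivity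
    have hfac2 : (Nat.factorial (m + 1 + n + 1) : ℝ) ≠ 0 := by positivity
    have he : m + 1 + n + 1 = m + (n+1) + 1 := by ring
    rw [he]
    rw [Nat.factorial_succ (m), Nat.factorial_succ n]
    push_cast
    field_simp

theorem stmt19 (p : ℕ) (hp : 1 ≤ p) (R L : ℝ) (hR : 0 < R) (hL : 0 < L) :
    (∫ r in (0:ℝ)..R, (r - R) ^ (p - 1) * besselI 0 (L * Real.sqrt (2 * r))) =
      -((Nat.factorial (p - 1) : ℝ)) * (-Real.sqrt (2 * R) / L) ^ p *
        besselI p (L * Real.sqrt (2 * R)) := by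
  obtain ⟨q, rfl⟩ : ∃ q, p = q + 1 := ⟨p - 1, (Nat.succ_pred_eq_of_pos hp).symm⟩
  simp only [Nat.add_sub_cancel]
  set X := Real.sqrt (2 * R) with hXdef
  have hX : X ^ 2 = 2 * R := Real.sq_sqrt (by linarith)
  set F : ℕ → ℝ → ℝ := fun k r =>
    (r - R) ^ q * ((L ^ 2 * r / 2) ^ k / ((Nat.factorial k : ℝ) * (Nat.factorial k : ℝ)))
    with hF
  -- Step 1: rewrite the integrand as a tsum on Ioc 0 R
  rw [intervalIntegral.integral_of_le hR.le]
  have hEq : Set.EqOn (fun r => (r - R) ^ q * besselI 0 (L * Real.sqrt (2 * r)))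
      (fun r => ∑' k, F k r) (Set.Ioc 0 R) := by
    intro r hr
    have hr0 : (0:ℝ) ≤ r := hr.1.le
    have hterm : ∀ k : ℕ, ((L * Real.sqrt (2 * r)) / 2) ^ (2 * k) = (L ^ 2 * r / 2) ^ k := by
      intro k
      rw [pow_mul, div_pow, mul_pow, Real.sq_sqrt (by linarith)]
      congr 1
      ring
    simp only
    rw [besselI]
    simp only [add_zero]
    rw [show (∑' k : ℕ, ((L * Real.sqrt (2*r)) / 2) ^ (2*k) /
        ((Nat.factorial k : ℝ) * (Nat.factorial k : ℝ)))
      = ∑' k : ℕ, (L ^ 2 * r / 2) ^ k / ((Nat.factorial k : ℝ) * (Nat.factorial k : ℝ)) from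
      tsum_congr fun k => by rw [hterm k]]
    exact tsum_mul_left.symm
  rw [MeasureTheory.setIntegral_congr_fun measurableSet_Ioc hEq]
  -- Step 2: swap integral and sum
  have hInt : ∀ k, Integrable (F k) (volume.restrict (Set.Ioc 0 R)) := by
    intro k
    apply Continuous.integrableOn_Ioc
    continuity
  have hSum : Summable fun k => ∫ r in Set.Ioc (0:ℝ) R, ‖F k r‖ := by
    set C : ℕ → ℝ := fun k =>
      R ^ q * ((L ^ 2 * R / 2) ^ k / ((Nat.factorial k : ℝ) * (Nat.factorial k : ℝ))) with hC
    have hb : ∀ k, (∫ r in Set.Ioc (0:ℝ) R, ‖F k r‖) ≤ C k * R := by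
      intro k
      have hle : ∀ r ∈ Set.Ioc (0:ℝ) R, ‖F k r‖ ≤ C k := by
        intro r hr
        have h1 : |r - R| ≤ R := abs_le.2 ⟨by linarith [hr.1], by linarith [hr.2, hR]⟩
        have h2 : |L ^ 2 * r / 2| ≤ L ^ 2 * R / 2 := by
          rw [abs_of_nonneg (by nlinarith [hr.1.le, sq_nonneg L] : (0:ℝ) ≤ L ^ 2 * r / 2)]
          have := hr.2
          nlinarith [sq_nonneg L]
        simp only [hF, hC]
        rw [Real.norm_eq_abs, abs_mul, abs_pow, abs_div, abs_pow,
          abs_of_pos (show (0:ℝ) < (Nat.factorial k : ℝ) * (Nat.factorial k : ℝ) by positivity)]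
        gcongr
      calc (∫ r in Set.Ioc (0:ℝ) R, ‖F k r‖) ≤ ∫ _ in Set.Ioc (0:ℝ) R, C k :=
            setIntegral_mono_on (hInt k).norm (integrableOn_const (by
              rw [Real.volume_Ioc]; exact ENNReal.ofReal_ne_top)) measurableSet_Ioc hle
        _ = C k * R := by
            rw [setIntegral_const, measureReal_def, Real.volume_Ioc, smul_eq_mul, ENNReal.toReal_ofReal (by linarith)]
            ring
    have hg : Summable fun k : ℕ =>
        (L ^ 2 * R / 2) ^ k / ((Nat.factorial k : ℝ) * (Nat.factorial k : ℝ)) := by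
      apply Summable.of_nonneg_of_le (fun k => by positivity)
        (fun k => ?_) (Real.summable_pow_div_factorial (L ^ 2 * R / 2))
      have h1 : (1:ℝ) ≤ (Nat.factorial k : ℝ) := by
        exact_mod_cast Nat.one_le_iff_ne_zero.2 k.factorial_ne_zero
      have hx : (0:ℝ) ≤ (L ^ 2 * R / 2) ^ k := by positivity
      rw [div_le_div_iff₀ (by positivity) (by positivity)]
      nlinarith [mul_nonneg (mul_nonneg hx (le_trans zero_le_one h1)) (sub_nonneg.2 h1)]
    exact Summable.of_nonneg_of_le
      (fun k => integral_nonneg fun r => norm_nonneg _) hb (((hg.mul_left (R ^ q)).mul_right R))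
  rw [← MeasureTheory.integral_tsum_of_summable_integral_norm hInt hSum]
  -- Step 3: evaluate each integral
  have hFk : ∀ k : ℕ, (∫ r in Set.Ioc (0:ℝ) R, F k r) =
      (-1) ^ q * ((L ^ 2 / 2) ^ k / ((Nat.factorial k : ℝ) * (Nat.factorial k : ℝ))) *
        ((Nat.factorial k * Nat.factorial q / Nat.factorial (k + q + 1)) * R ^ (k + q + 1)) := by
    intro k
    rw [← intervalIntegral.integral_of_le hR.le]
    have hcongr : ∀ r : ℝ, F k r =
        ((-1) ^ q * ((L ^ 2 / 2) ^ k / ((Nat.factorial k : ℝ) * (Nat.factorial k : ℝ)))) *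
          (r ^ k * (R - r) ^ q) := by
      intro r
      simp only [hF]
      rw [show r - R = -(R - r) by ring, neg_pow]
      ring
    rw [intervalIntegral.integral_congr (fun r _ => hcongr r),
      intervalIntegral.integral_const_mul, beta_nat q k R]
  rw [tsum_congr hFk]
  -- Step 4: expand the RHS and compare termwise
  rw [besselI, ← tsum_mul_left]
  refine tsum_congr fun k => ?_
  have hkq : k + (q + 1) = k + q + 1 := rfl
  rw [hkq]
  have hpow : (L * X / 2) ^ (2 * k + (q + 1)) =
      (L ^ 2 * R / 2) ^ k * (L * X / 2) ^ (q + 1) := by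
    rw [pow_add, pow_mul]
    congr 2
    rw [div_pow, mul_pow, hX]
    ring
  rw [hpow]
  have hbase : (-X / L) * (L * X / 2) = -R := by
    field_simp
    nlinarith [hX]
  have hcomb : (-X / L) ^ (q + 1) * (L * X / 2) ^ (q + 1) = (-R) ^ (q + 1) := by
    rw [← mul_pow, hbase]
  have hfk : (Nat.factorial k : ℝ) ≠ 0 := by positivity
  have hfkq : (Nat.factorial (k + q + 1) : ℝ) ≠ 0 := by positivity
  calc (-1) ^ q * ((L ^ 2 / 2) ^ k / ((Nat.factorial k : ℝ) * (Nat.factorial k : ℝ))) *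
        ((Nat.factorial k * Nat.factorial q / Nat.factorial (k + q + 1)) * R ^ (k + q + 1))
      = -(Nat.factorial q : ℝ) * (-R) ^ (q + 1) *
          ((L ^ 2 * R / 2) ^ k / ((Nat.factorial k : ℝ) * (Nat.factorial (k + q + 1) : ℝ))) := by
        field_simp
        ring
    _ = -(Nat.factorial q : ℝ) * (-X / L) ^ (q + 1) *
          ((L ^ 2 * R / 2) ^ k * (L * X / 2) ^ (q + 1) /
            ((Nat.factorial k : ℝ) * (Nat.factorial (k + q + 1) : ℝ))) := by
        rw [← hcomb]
        ring
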